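/- In the Grassmannian Gr(2,4) of 2-dimensional subspaces of a 4-dimensional vector space V over an algebraically closed field, if m₁ and m₂ are two distinct 2-planes each meeting three pairwise 'general' fixed 2-planes ℓ₁, ℓ₂, ℓ₃ nontrivially (where ℓ₁, ℓ₂, ℓ₃ pairwise intersect only in 0), then m₁ ∩ m₂ = 0; i.e., any two distinct common transversals to three pairwise transverse 2-planes in C⁴ are themselves transverse. -/
import Mathlib

section aux
variable {K V : Type*} [Field K] [AddCommGroup V] [Module K V]

lemma stmt19_pair_indep {ℓ₁ ℓ₂ : Submodule K V} (h12 : ℓ₁ ⊓ ℓ₂ = ⊥)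
    {a b : V} (ha : a ∈ ℓ₁) (hb : b ∈ ℓ₂) (ha0 : a ≠ 0) (hb0 : b ≠ 0) :
    LinearIndependent K ![a, b] := by
  rw [LinearIndependent.pair_iff]
  intro s t hst
  have h1 : s • a ∈ ℓ₁ := ℓ₁.smul_mem s ha
  have h2 : s • a ∈ ℓ₂ := by
    have : s • a = -(t • b) := by linear_combination (norm := module) hst
    rw [this]; exact ℓ₂.neg_mem (ℓ₂.smul_mem t hb)
  have hsa : s • a = 0 := by
    have : s • a ∈ ℓ₁ ⊓ ℓ₂ := ⟨h1, h2⟩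
    rwa [h12, Submodule.mem_bot] at this
  have hs : s = 0 := by
    rcases smul_eq_zero.mp hsa with h | h
    · exact h
    · exact absurd h ha0
  constructor
  · exact hs
  · have : t • b = 0 := by rw [hs] at hst; simpa using hst
    rcases smul_eq_zero.mp this with h | h
    · exact h
    · exact absurd h hb0

lemma stmt19_span_pair {m : Submodule K V} (hm : Module.finrank K m = 2)
    {a b : V} (ha : a ∈ m) (hb : b ∈ m) (hli : LinearIndependent K ![a, b]) :
    m = Submodule.span K {a, b} := by
  have : FiniteDimensional K m := Module.finite_of_finrank_pos (by omega)
  have hle : Submodule.span K {a, b} ≤ m := by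
    rw [Submodule.span_le]; rintro x (rfl | rfl) <;> assumption
  have hr : Set.range ![a, b] = ({a, b} : Set V) := by
    ext x; simp [Fin.exists_fin_two, or_comm]
  have hfr : Module.finrank K (Submodule.span K ({a, b} : Set V)) = 2 := by
    have := finrank_span_eq_card hli
    rwa [hr] at this
  exact (Submodule.eq_of_le_of_finrank_le hle (by rw [hm, hfr])).symm

lemma stmt19_key {ℓ₁ ℓ₂ ℓ₃ m : Submodule K V}
    (h12 : ℓ₁ ⊓ ℓ₂ = ⊥) (h13 : ℓ₁ ⊓ ℓ₃ = ⊥) (h23 : ℓ₂ ⊓ ℓ₃ = ⊥)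
    (hm : Module.finrank K m = 2)
    (h1 : m ⊓ ℓ₁ ≠ ⊥) (h2 : m ⊓ ℓ₂ ≠ ⊥) (h3 : m ⊓ ℓ₃ ≠ ⊥) :
    ∃ a b : V, a ∈ ℓ₁ ∧ b ∈ ℓ₂ ∧ a ≠ 0 ∧ b ≠ 0 ∧ a + b ∈ ℓ₃ ∧
      m = Submodule.span K {a, b} := by
  obtain ⟨a₀, ⟨ha₀m, ha₀⟩, ha₀0⟩ := Submodule.exists_mem_ne_zero_of_ne_bot h1
  obtain ⟨b₀, ⟨hb₀m, hb₀⟩, hb₀0⟩ := Submodule.exists_mem_ne_zero_of_ne_bot h2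
  obtain ⟨c, ⟨hcm, hc⟩, hc0⟩ := Submodule.exists_mem_ne_zero_of_ne_bot h3
  have hli := stmt19_pair_indep h12 ha₀ hb₀ ha₀0 hb₀0
  have hspan := stmt19_span_pair hm ha₀m hb₀m hli
  have hcspan : c ∈ Submodule.span K ({a₀, b₀} : Set V) := hspan ▸ hcm
  rw [Submodule.mem_span_pair] at hcspan
  obtain ⟨α, β, hαβ⟩ := hcspan
  have hα : α ≠ 0 := by
    rintro rfl
    have : c ∈ ℓ₂ := by rw [← hαβ]; simpa using ℓ₂.smul_mem β hb₀
    have : c ∈ ℓ₂ ⊓ ℓ₃ := ⟨this, hc⟩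
    rw [h23, Submodule.mem_bot] at this
    exact hc0 this
  have hβ : β ≠ 0 := by
    rintro rfl
    have : c ∈ ℓ₁ := by rw [← hαβ]; simpa using ℓ₁.smul_mem α ha₀
    have : c ∈ ℓ₁ ⊓ ℓ₃ := ⟨this, hc⟩
    rw [h13, Submodule.mem_bot] at this
    exact hc0 this
  refine ⟨α • a₀, β • b₀, ℓ₁.smul_mem α ha₀, ℓ₂.smul_mem β hb₀,
    smul_ne_zero hα ha₀0, smul_ne_zero hβ hb₀0, by rwa [hαβ], ?_⟩
  exact stmt19_span_pair hm (m.smul_mem α ha₀m) (m.smul_mem β hb₀m)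
    (stmt19_pair_indep h12 (ℓ₁.smul_mem α ha₀) (ℓ₂.smul_mem β hb₀)
      (smul_ne_zero hα ha₀0) (smul_ne_zero hβ hb₀0))

end aux

theorem stmt19 (K V : Type*) [Field K] [IsAlgClosed K] [AddCommGroup V] [Module K V]
    (hV : Module.finrank K V = 4)
    (ℓ₁ ℓ₂ ℓ₃ m₁ m₂ : Submodule K V)
    (hℓ₁ : Module.finrank K ℓ₁ = 2) (hℓ₂ : Module.finrank K ℓ₂ = 2)
    (hℓ₃ : Module.finrank K ℓ₃ = 2)
    (hm₁ : Module.finrank K m₁ = 2) (hm₂ : Module.finrank K m₂ = 2)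
    (h12 : ℓ₁ ⊓ ℓ₂ = ⊥) (h13 : ℓ₁ ⊓ ℓ₃ = ⊥) (h23 : ℓ₂ ⊓ ℓ₃ = ⊥)
    (hm₁ℓ₁ : m₁ ⊓ ℓ₁ ≠ ⊥) (hm₁ℓ₂ : m₁ ⊓ ℓ₂ ≠ ⊥) (hm₁ℓ₃ : m₁ ⊓ ℓ₃ ≠ ⊥)
    (hm₂ℓ₁ : m₂ ⊓ ℓ₁ ≠ ⊥) (hm₂ℓ₂ : m₂ ⊓ ℓ₂ ≠ ⊥) (hm₂ℓ₃ : m₂ ⊓ ℓ₃ ≠ ⊥)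
    (hne : m₁ ≠ m₂) :
    m₁ ⊓ m₂ = ⊥ := by
  have : FiniteDimensional K V := Module.finite_of_finrank_pos (by omega)
  obtain ⟨a₁, b₁, ha₁, hb₁, ha₁0, hb₁0, hab₁, hsp₁⟩ :=
    stmt19_key h12 h13 h23 hm₁ hm₁ℓ₁ hm₁ℓ₂ hm₁ℓ₃
  obtain ⟨a₂, b₂, ha₂, hb₂, ha₂0, hb₂0, hab₂, hsp₂⟩ :=
    stmt19_key h12 h13 h23 hm₂ hm₂ℓ₁ hm₂ℓ₂ hm₂ℓ₃
  by_cases hcol : ∃ lam : K, a₂ = lam • a₁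
  · -- then m₁ = m₂, contradiction
    exfalso
    obtain ⟨lam, hlam⟩ := hcol
    have hlam0 : lam ≠ 0 := by rintro rfl; simp at hlam; exact ha₂0 hlam
    have hb₂' : b₂ = lam • b₁ := by
      have hmem : b₂ - lam • b₁ ∈ ℓ₂ := ℓ₂.sub_mem hb₂ (ℓ₂.smul_mem lam hb₁)
      have hmem3 : b₂ - lam • b₁ ∈ ℓ₃ := by
        have : b₂ - lam • b₁ = (a₂ + b₂) - lam • (a₁ + b₁) := by
          rw [hlam]; module
        rw [this]
        exact ℓ₃.sub_mem hab₂ (ℓ₃.smul_mem lam hab₁)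
      have : b₂ - lam • b₁ ∈ ℓ₂ ⊓ ℓ₃ := ⟨hmem, hmem3⟩
      rw [h23, Submodule.mem_bot, sub_eq_zero] at this
      exact this
    apply hne
    have hle : m₂ ≤ m₁ := by
      rw [hsp₂, Submodule.span_le]
      rintro x (rfl | rfl)
      · rw [hlam, hsp₁]
        exact Submodule.smul_mem _ _ (Submodule.subset_span (by simp))
      · rw [hb₂', hsp₁]
        exact Submodule.smul_mem _ _ (Submodule.subset_span (by simp))
    exact (Submodule.eq_of_le_of_finrank_le hle (by rw [hm₁, hm₂])).symm
  · rw [Submodule.eq_bot_iff]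
    rintro v hv
    rw [Submodule.mem_inf] at hv
    obtain ⟨hv1, hv2⟩ := hv
    rw [hsp₁, Submodule.mem_span_pair] at hv1
    rw [hsp₂, Submodule.mem_span_pair] at hv2
    obtain ⟨s, t, hst⟩ := hv1
    obtain ⟨s', t', hst'⟩ := hv2
    have heq : s • a₁ - s' • a₂ = t' • b₂ - t • b₁ := by
      have := hst.trans hst'.symm
      linear_combination (norm := module) this
    have hmem1 : s • a₁ - s' • a₂ ∈ ℓ₁ := ℓ₁.sub_mem (ℓ₁.smul_mem s ha₁) (ℓ₁.smul_mem s' ha₂)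
    have hmem2 : s • a₁ - s' • a₂ ∈ ℓ₂ := by
      rw [heq]; exact ℓ₂.sub_mem (ℓ₂.smul_mem t' hb₂) (ℓ₂.smul_mem t hb₁)
    have hz : s • a₁ - s' • a₂ = 0 := by
      have : s • a₁ - s' • a₂ ∈ ℓ₁ ⊓ ℓ₂ := ⟨hmem1, hmem2⟩
      rwa [h12, Submodule.mem_bot] at this
    have hzb : t' • b₂ - t • b₁ = 0 := by rw [← heq]; exact hz
    have hs' : s' = 0 := by
      by_contra hs'
      exact hcol ⟨s'⁻¹ * s, by
        rw [sub_eq_zero] at hz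
        rw [mul_smul, hz, inv_smul_smul₀ hs']⟩
    have hs : s = 0 := by
      rw [hs', zero_smul, sub_zero, smul_eq_zero] at hz
      exact hz.resolve_right ha₁0
    have ht' : t' = 0 := by
      by_contra ht'
      have hb₂' : b₂ = (t'⁻¹ * t) • b₁ := by
        rw [sub_eq_zero] at hzb
        rw [mul_smul, ← hzb, inv_smul_smul₀ ht']
      apply hcol
      refine ⟨t'⁻¹ * t, ?_⟩
      have hmem : a₂ - (t'⁻¹ * t) • a₁ ∈ ℓ₁ :=
        ℓ₁.sub_mem ha₂ (ℓ₁.smul_mem _ ha₁)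
      have hmem3 : a₂ - (t'⁻¹ * t) • a₁ ∈ ℓ₃ := by
        have : a₂ - (t'⁻¹ * t) • a₁ = (a₂ + b₂) - (t'⁻¹ * t) • (a₁ + b₁) := by
          rw [hb₂']; module
        rw [this]
        exact ℓ₃.sub_mem hab₂ (ℓ₃.smul_mem _ hab₁)
      have : a₂ - (t'⁻¹ * t) • a₁ ∈ ℓ₁ ⊓ ℓ₃ := ⟨hmem, hmem3⟩
      rw [h13, Submodule.mem_bot, sub_eq_zero] at this
      exact this
    have ht : t = 0 := by
      rw [ht', zero_smul, zero_sub, neg_eq_zero, smul_eq_zero] at hzb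
      exact hzb.resolve_right hb₁0
    rw [← hst, hs, ht, zero_smul, zero_smul, add_zero]
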